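/- MacMahon's Multiplication Theorem (q-analogue): for ab-words u of degree n−1 and v of degree m−1, [n+m choose n]_q · β_q(u) · β_q(v) = β_q(u·a·v) + β_q(u·b·v), where β_q(w) = ∑ q^{inv(σ)} over permutations σ with descent word w, and [n+m choose n]_q is the Gaussian binomial coefficient. -/

import Mathlib

/-- The descent word of a permutation of `Fin N` (`false` = letter `a` = ascent,
`true` = letter `b` = descent). -/
def descWord {N : ℕ} (σ : Equiv.Perm (Fin N)) : List Bool :=
  List.ofFn fun i : Fin (N - 1) =>
    decide (σ ⟨i.1 + 1, by have := i.2; omega⟩ < σ ⟨i.1, by have := i.2; omega⟩)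

/-- The number of inversions of a permutation. -/
def invNum {N : ℕ} (σ : Equiv.Perm (Fin N)) : ℕ :=
  (Finset.univ.filter fun p : Fin N × Fin N => p.1 < p.2 ∧ σ p.2 < σ p.1).card

namespace MacMahon
open Finset Polynomial
set_option maxHeartbeats 1000000

variable {n m : ℕ}

def mixInv {N : ℕ} (A : Finset (Fin N)) : ℕ :=
  ∑ x ∈ A, ∑ y ∈ Aᶜ, if y < x then 1 else 0

lemma compl_card (A : Finset (Fin (n + m))) (h : A.card = n) : Aᶜ.card = m := by
  simp [Finset.card_compl, h]

def toPerm (A : Finset (Fin (n + m))) (h : A.card = n)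
    (σ : Equiv.Perm (Fin n)) (τ : Equiv.Perm (Fin m)) : Equiv.Perm (Fin (n + m)) :=
  finSumFinEquiv.symm.trans <|
    (Equiv.sumCongr (σ.trans (A.orderIsoOfFin h).toEquiv)
      (τ.trans ((Aᶜ.orderIsoOfFin (compl_card A h)).toEquiv.trans
        (Equiv.subtypeEquivRight fun x => Finset.mem_compl)))).trans
      (Equiv.sumCompl (· ∈ A))

lemma toPerm_castAdd (A : Finset (Fin (n + m))) (h : A.card = n)
    (σ : Equiv.Perm (Fin n)) (τ : Equiv.Perm (Fin m)) (i : Fin n) :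
    toPerm A h σ τ (Fin.castAdd m i) = (A.orderIsoOfFin h (σ i) : Fin (n + m)) := by
  simp [toPerm]

lemma toPerm_natAdd (A : Finset (Fin (n + m))) (h : A.card = n)
    (σ : Equiv.Perm (Fin n)) (τ : Equiv.Perm (Fin m)) (j : Fin m) :
    toPerm A h σ τ (Fin.natAdd n j) = (Aᶜ.orderIsoOfFin (compl_card A h) (τ j) : Fin (n + m)) := by
  simp [toPerm]

lemma toPerm_lt_castAdd (A : Finset (Fin (n + m))) (h : A.card = n)
    (σ : Equiv.Perm (Fin n)) (τ : Equiv.Perm (Fin m)) (i i' : Fin n) :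
    toPerm A h σ τ (Fin.castAdd m i) < toPerm A h σ τ (Fin.castAdd m i') ↔ σ i < σ i' := by
  rw [toPerm_castAdd, toPerm_castAdd, Subtype.coe_lt_coe]
  exact (A.orderIsoOfFin h).lt_iff_lt

lemma toPerm_lt_natAdd (A : Finset (Fin (n + m))) (h : A.card = n)
    (σ : Equiv.Perm (Fin n)) (τ : Equiv.Perm (Fin m)) (j j' : Fin m) :
    toPerm A h σ τ (Fin.natAdd n j) < toPerm A h σ τ (Fin.natAdd n j') ↔ τ j < τ j' := by
  rw [toPerm_natAdd, toPerm_natAdd, Subtype.coe_lt_coe]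
  exact (Aᶜ.orderIsoOfFin (compl_card A h)).lt_iff_lt

lemma descWord_length {N : ℕ} (σ : Equiv.Perm (Fin N)) : (descWord σ).length = N - 1 := by
  simp [descWord]

lemma descWord_toPerm (A : Finset (Fin (n + 1 + (m + 1)))) (h : A.card = n + 1)
    (σ : Equiv.Perm (Fin (n + 1))) (τ : Equiv.Perm (Fin (m + 1))) :
    descWord (toPerm A h σ τ) = descWord σ ++
      (decide (toPerm A h σ τ ⟨n + 1, by omega⟩ < toPerm A h σ τ ⟨n, by omega⟩)
        :: descWord τ) := by
  apply List.ext_getElem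
  · simp only [descWord_length, List.length_append, List.length_cons]
    omega
  intro k h1 h2
  rw [descWord_length] at h1
  simp only [descWord, List.getElem_ofFn]
  rcases lt_trichotomy k n with hk | hk | hk
  · rw [List.getElem_append_left (by simp only [List.length_ofFn]; omega),
      List.getElem_ofFn]
    apply decide_eq_decide.mpr
    have e1 : (⟨k + 1, by omega⟩ : Fin (n + 1 + (m + 1))) =
        Fin.castAdd (m + 1) ⟨k + 1, by omega⟩ := rfl
    have e2 : (⟨k, by omega⟩ : Fin (n + 1 + (m + 1))) =
        Fin.castAdd (m + 1) ⟨k, by omega⟩ := rfl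
    rw [e1, e2, toPerm_lt_castAdd]
  · subst hk
    rw [List.getElem_append_right (by simp only [List.length_ofFn]; omega)]
    simp only [List.length_ofFn, Nat.add_sub_cancel, Nat.sub_self, List.getElem_cons_zero]
  · rw [List.getElem_append_right (by simp only [List.length_ofFn]; omega)]
    simp only [List.length_ofFn]
    rw [List.getElem_cons, dif_neg (by omega), List.getElem_ofFn]
    apply decide_eq_decide.mpr
    have e1 : (⟨k + 1, by omega⟩ : Fin (n + 1 + (m + 1))) =
        Fin.natAdd (n + 1) ⟨k - n, by omega⟩ := by
      apply Fin.ext; simp [Fin.natAdd]; omega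
    have e2 : (⟨k, by omega⟩ : Fin (n + 1 + (m + 1))) =
        Fin.natAdd (n + 1) ⟨k - n - 1, by omega⟩ := by
      apply Fin.ext; simp [Fin.natAdd]; omega
    rw [e1, e2]
    refine Iff.trans (toPerm_lt_natAdd A h σ τ ⟨k - n, by omega⟩ ⟨k - n - 1, by omega⟩) ?_
    constructor <;> intro hh <;> convert hh using 3 <;> (simp <;> omega)


lemma invNum_eq_sum {N : ℕ} (σ : Equiv.Perm (Fin N)) :
    invNum σ = ∑ x : Fin N, ∑ y : Fin N, if x < y ∧ σ y < σ x then 1 else 0 := by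
  rw [invNum, Finset.card_filter, Fintype.sum_prod_type]

lemma invNum_toPerm (A : Finset (Fin (n + m))) (h : A.card = n)
    (σ : Equiv.Perm (Fin n)) (τ : Equiv.Perm (Fin m)) :
    invNum (toPerm A h σ τ) = invNum σ + invNum τ + mixInv A := by
  set π := toPerm A h σ τ with hπ
  have reindex : ∀ f : Fin (n + m) → Fin (n + m) → ℕ,
      (∑ x, ∑ y, f x y) =
        ∑ s : Fin n ⊕ Fin m, ∑ t : Fin n ⊕ Fin m, f (finSumFinEquiv s) (finSumFinEquiv t) := by
    intro f
    rw [← Equiv.sum_comp finSumFinEquiv (fun x => ∑ y, f x y)]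
    exact Finset.sum_congr rfl fun s _ => (Equiv.sum_comp finSumFinEquiv _).symm
  rw [invNum_eq_sum, reindex]
  rw [Fintype.sum_sum_type]
  simp only [Fintype.sum_sum_type, finSumFinEquiv_apply_left, finSumFinEquiv_apply_right]
  rw [Finset.sum_add_distrib, Finset.sum_add_distrib]
  have Q11 : (∑ i : Fin n, ∑ i' : Fin n,
      if Fin.castAdd m i < Fin.castAdd m i' ∧ π (Fin.castAdd m i') < π (Fin.castAdd m i)
      then 1 else 0) = invNum σ := by
    rw [invNum_eq_sum]
    refine Finset.sum_congr rfl fun i _ => Finset.sum_congr rfl fun i' _ => ?_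
    refine if_congr (and_congr ?_ ?_) rfl rfl
    · simp only [Fin.lt_def, Fin.coe_castAdd]
    · rw [hπ, toPerm_castAdd, toPerm_castAdd, Subtype.coe_lt_coe]
      exact (A.orderIsoOfFin h).lt_iff_lt
  have Q22 : (∑ j : Fin m, ∑ j' : Fin m,
      if Fin.natAdd n j < Fin.natAdd n j' ∧ π (Fin.natAdd n j') < π (Fin.natAdd n j)
      then 1 else 0) = invNum τ := by
    rw [invNum_eq_sum]
    refine Finset.sum_congr rfl fun j _ => Finset.sum_congr rfl fun j' _ => ?_
    refine if_congr (and_congr ?_ ?_) rfl rfl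
    · simp only [Fin.lt_def, Fin.coe_natAdd]
      omega
    · rw [hπ, toPerm_natAdd, toPerm_natAdd, Subtype.coe_lt_coe]
      exact (Aᶜ.orderIsoOfFin (compl_card A h)).lt_iff_lt
  have Q21 : (∑ j : Fin m, ∑ i : Fin n,
      if Fin.natAdd n j < Fin.castAdd m i ∧ π (Fin.castAdd m i) < π (Fin.natAdd n j)
      then 1 else 0) = 0 := by
    refine Finset.sum_eq_zero fun j _ => Finset.sum_eq_zero fun i _ => ?_
    rw [if_neg]
    rintro ⟨h1, -⟩
    simp only [Fin.lt_def, Fin.coe_natAdd, Fin.coe_castAdd] at h1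
    omega
  have Q12 : (∑ i : Fin n, ∑ j : Fin m,
      if Fin.castAdd m i < Fin.natAdd n j ∧ π (Fin.natAdd n j) < π (Fin.castAdd m i)
      then 1 else 0) = mixInv A := by
    have main : (∑ i : Fin n, ∑ j : Fin m,
        if Fin.castAdd m i < Fin.natAdd n j ∧ π (Fin.natAdd n j) < π (Fin.castAdd m i)
        then 1 else 0) =
        ∑ a : {x // x ∈ A}, ∑ b : {x // x ∈ Aᶜ},
          if (b : Fin (n + m)) < (a : Fin (n + m)) then (1:ℕ) else 0 := by
      refine Fintype.sum_equiv (σ.trans (A.orderIsoOfFin h).toEquiv) _ _ (fun i => ?_)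
      refine Fintype.sum_equiv (τ.trans ((Aᶜ).orderIsoOfFin (compl_card A h)).toEquiv) _ _
        (fun j => ?_)
      refine if_congr ?_ rfl rfl
      rw [hπ, toPerm_castAdd, toPerm_natAdd, and_iff_right]
      · exact Iff.rfl
      · simp only [Fin.lt_def, Fin.coe_castAdd, Fin.coe_natAdd]
        omega
    rw [main, mixInv, ← Finset.sum_coe_sort A]
    refine Finset.sum_congr rfl fun a _ => ?_
    rw [← Finset.sum_coe_sort Aᶜ]
  erw [Q11, Q22, Q21, Q12]
  omega

lemma toPerm_castAdd_mem (A : Finset (Fin (n + m))) (h : A.card = n)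
    (σ : Equiv.Perm (Fin n)) (τ : Equiv.Perm (Fin m)) (i : Fin n) :
    toPerm A h σ τ (Fin.castAdd m i) ∈ A := by
  rw [toPerm_castAdd]; exact Finset.coe_mem _

lemma mem_iff_exists (A : Finset (Fin (n + m))) (h : A.card = n)
    (σ : Equiv.Perm (Fin n)) (τ : Equiv.Perm (Fin m)) (x : Fin (n + m)) :
    x ∈ A ↔ ∃ i : Fin n, toPerm A h σ τ (Fin.castAdd m i) = x := by
  constructor
  · intro hx
    refine ⟨σ.symm ((A.orderIsoOfFin h).symm ⟨x, hx⟩), ?_⟩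
    rw [toPerm_castAdd]
    simp
  · rintro ⟨i, rfl⟩
    exact toPerm_castAdd_mem A h σ τ i

/-- the triple space -/
abbrev Triple (n m : ℕ) :=
  {A : Finset (Fin (n + m)) // A.card = n} × Equiv.Perm (Fin n) × Equiv.Perm (Fin m)

def tripleMap (t : Triple n m) : Equiv.Perm (Fin (n + m)) :=
  toPerm t.1.1 t.1.2 t.2.1 t.2.2

lemma tripleMap_injective : Function.Injective (tripleMap (n := n) (m := m)) := by
  rintro ⟨⟨A, hA⟩, σ, τ⟩ ⟨⟨A', hA'⟩, σ', τ'⟩ heq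
  simp only [tripleMap] at heq
  have hAA : A = A' := by
    ext x
    rw [mem_iff_exists A hA σ τ x, mem_iff_exists A' hA' σ' τ' x, heq]
  subst hAA
  have hσ : σ = σ' := by
    ext i
    have := DFunLike.congr_fun heq (Fin.castAdd m i)
    rw [toPerm_castAdd, toPerm_castAdd] at this
    have h2 := Subtype.coe_injective this
    have h3 := (A.orderIsoOfFin hA).injective h2
    exact congrArg Fin.val h3
  have hτ : τ = τ' := by
    ext j
    have := DFunLike.congr_fun heq (Fin.natAdd n j)
    rw [toPerm_natAdd, toPerm_natAdd] at this
    have h2 := Subtype.coe_injective this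
    have h3 := (Aᶜ.orderIsoOfFin (compl_card A hA)).injective h2
    exact congrArg Fin.val h3
  simp [hσ, hτ]

lemma tripleMap_bijective : Function.Bijective (tripleMap (n := n) (m := m)) := by
  rw [Fintype.bijective_iff_injective_and_card]
  refine ⟨tripleMap_injective, ?_⟩
  simp only [Fintype.card_prod, Fintype.card_perm, Fintype.card_fin, Fintype.card_finset_len]
  rw [← Nat.choose_mul_factorial_mul_factorial (Nat.le_add_right n m), Nat.add_sub_cancel_left]
  ring

lemma sum_perm_eq (f : Equiv.Perm (Fin (n + m)) → Polynomial ℚ) :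
    (∑ π : Equiv.Perm (Fin (n + m)), f π) = ∑ t : Triple n m, f (tripleMap t) :=
  (Fintype.sum_bijective tripleMap tripleMap_bijective _ _ (fun _ => rfl)).symm

noncomputable def invPoly (k : ℕ) : Polynomial ℚ := ∑ σ : Equiv.Perm (Fin k), X ^ invNum σ

noncomputable def gPoly (n m : ℕ) : Polynomial ℚ :=
  ∑ A ∈ Finset.powersetCard n (Finset.univ : Finset (Fin (n + m))), X ^ mixInv A

lemma gPoly_eq_sum_subtype :
    gPoly n m = ∑ a : {A : Finset (Fin (n + m)) // A.card = n}, X ^ mixInv a.1 := by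
  rw [gPoly]
  exact Finset.sum_subtype _ (fun x => Finset.mem_powersetCard_univ) _


noncomputable def qFactorial' (n : ℕ) : Polynomial ℚ :=
  ∏ i ∈ Finset.range n, ∑ j ∈ Finset.range (i + 1), Polynomial.X ^ j

lemma master (n m : ℕ) : invPoly (n + m) = gPoly n m * invPoly n * invPoly m := by
  rw [invPoly, sum_perm_eq, gPoly_eq_sum_subtype]
  have step : ∀ t : Triple n m,
      (X : Polynomial ℚ) ^ invNum (tripleMap t) =
        X ^ mixInv t.1.1 * (X ^ invNum t.2.1 * X ^ invNum t.2.2) := by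
    rintro ⟨⟨A, hA⟩, σ, τ⟩
    rw [tripleMap, invNum_toPerm, pow_add, pow_add]
    ring
  simp only [step]
  rw [Fintype.sum_prod_type]
  rw [Finset.sum_mul, Finset.sum_mul]
  refine Finset.sum_congr rfl fun a _ => ?_
  rw [Fintype.sum_prod_type]
  simp only [← Finset.mul_sum]
  rw [← Finset.sum_mul, invPoly, invPoly]
  ring

lemma invPoly_zero : invPoly 0 = 1 := by
  rw [invPoly]
  rw [Finset.sum_eq_single_of_mem (Equiv.refl _) (Finset.mem_univ _)]
  · have : invNum (Equiv.refl (Fin 0)) = 0 := by decide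
    rw [this, pow_zero]
  · intro b _ hb
    exact absurd (Subsingleton.elim b (Equiv.refl _)) hb

lemma mixInv_compl_singleton (n : ℕ) (j : Fin (n + 1)) :
    mixInv ({j}ᶜ : Finset (Fin (n + 1))) = n - j := by
  rw [mixInv]
  have h1 : (({j}ᶜ : Finset (Fin (n + 1))))ᶜ = {j} := compl_compl _
  rw [h1]
  simp only [Finset.sum_singleton]
  have h2 : ∀ x : Fin (n + 1), (if j < x then (1:ℕ) else 0) = if x ∈ Finset.Ioi j then 1 else 0 := by
    intro x; simp [Finset.mem_Ioi]
  have h3 : (∑ x ∈ ({j}ᶜ : Finset (Fin (n + 1))), if j < x then (1:ℕ) else 0)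
      = ∑ x : Fin (n + 1), if j < x then (1:ℕ) else 0 := by
    rw [← Finset.sum_compl_add_sum ({j} : Finset (Fin (n + 1)))
      (fun x => if j < x then (1:ℕ) else 0)]
    simp [Finset.filter_singleton]
  rw [h3]
  simp only [h2]
  rw [Finset.sum_ite_mem, Finset.univ_inter, Finset.sum_const, smul_eq_mul, mul_one]
  rw [Fin.card_Ioi]
  omega

lemma gPoly_one (n : ℕ) : gPoly n 1 = ∑ j ∈ Finset.range (n + 1), X ^ j := by
  rw [gPoly]
  have hbij : (∑ A ∈ Finset.powersetCard n (Finset.univ : Finset (Fin (n + 1))), (X:Polynomial ℚ) ^ mixInv A)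
      = ∑ j : Fin (n + 1), X ^ mixInv ({j}ᶜ : Finset (Fin (n + 1))) := by
    refine (Finset.sum_bij (fun j _ => ({j}ᶜ : Finset (Fin (n + 1)))) ?_ ?_ ?_ ?_).symm
    · intro j _
      rw [Finset.mem_powersetCard_univ, Finset.card_compl]
      simp
    · intro a _ b _ hab
      exact Finset.singleton_injective (compl_injective hab)
    · intro A hA
      rw [Finset.mem_powersetCard_univ] at hA
      have hc : Aᶜ.card = 1 := by
        rw [Finset.card_compl, hA]
        simp
      obtain ⟨j, hj⟩ := Finset.card_eq_one.mp hc
      exact ⟨j, Finset.mem_univ _, by show ({j}ᶜ : Finset (Fin (n+1))) = A; rw [← hj, compl_compl]⟩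
    · intro j _
      rfl
  rw [hbij]
  simp only [mixInv_compl_singleton]
  rw [Fin.sum_univ_eq_sum_range (fun j => (X:Polynomial ℚ) ^ (n - j)) (n + 1)]
  have hre : ∑ j ∈ Finset.range (n + 1), (X:Polynomial ℚ) ^ (n - j)
      = ∑ j ∈ Finset.range (n + 1), (X:Polynomial ℚ) ^ (n + 1 - 1 - j) := by
    refine Finset.sum_congr rfl fun j hj => ?_
    rw [Finset.mem_range] at hj
    congr 1
  rw [hre, Finset.sum_range_reflect]

lemma invPoly_eq_qFactorial' (k : ℕ) : invPoly k = qFactorial' k := by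
  induction k with
  | zero => rw [invPoly_zero, qFactorial', Finset.range_zero, Finset.prod_empty]
  | succ k ih =>
      have h1 : invPoly 1 = 1 := by
        rw [invPoly]
        rw [Finset.sum_eq_single_of_mem (Equiv.refl _) (Finset.mem_univ _)]
        · have : invNum (Equiv.refl (Fin 1)) = 0 := by decide
          rw [this, pow_zero]
        · intro b _ hb
          exact absurd (Subsingleton.elim b (Equiv.refl _)) hb
      have := master k 1
      rw [h1, mul_one, gPoly_one, ih] at this
      rw [this]
      simp only [qFactorial']
      rw [Finset.prod_range_succ]
      ring

noncomputable def desPoly'' (N : ℕ) (w : List Bool) : Polynomial ℚ :=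
  ∑ σ : Equiv.Perm (Fin N), if descWord σ = w then X ^ invNum σ else 0

lemma splitIte (u v ds dt : List Bool) (d : Bool) (x : Polynomial ℚ)
    (hlen : ds.length = u.length) :
    ((if ds ++ d :: dt = u ++ false :: v then x else 0)
      + (if ds ++ d :: dt = u ++ true :: v then x else 0))
    = if ds = u ∧ dt = v then x else 0 := by
  have app : ∀ c : Bool, (ds ++ d :: dt = u ++ c :: v) ↔ (ds = u ∧ d = c ∧ dt = v) := by
    intro c
    constructor
    · intro hh
      obtain ⟨h1, h2⟩ := List.append_inj hh hlen
      refine ⟨h1, ?_⟩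
      simpa using h2
    · rintro ⟨rfl, rfl, rfl⟩
      rfl
  simp only [app]
  cases d <;> by_cases h1 : ds = u <;> by_cases h2 : dt = v <;> simp [h1, h2]

lemma key (u v : List Bool) :
    desPoly'' (u.length + 1 + (v.length + 1)) (u ++ false :: v)
      + desPoly'' (u.length + 1 + (v.length + 1)) (u ++ true :: v)
    = gPoly (u.length + 1) (v.length + 1)
      * desPoly'' (u.length + 1) u * desPoly'' (v.length + 1) v := by
  rw [desPoly'', desPoly'', ← Finset.sum_add_distrib]
  rw [sum_perm_eq (n := u.length + 1) (m := v.length + 1)]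
  have step : ∀ t : Triple (u.length + 1) (v.length + 1),
      ((if descWord (tripleMap t) = u ++ false :: v
          then (X : Polynomial ℚ) ^ invNum (tripleMap t) else 0)
        + (if descWord (tripleMap t) = u ++ true :: v
          then (X : Polynomial ℚ) ^ invNum (tripleMap t) else 0))
      = X ^ mixInv t.1.1 *
          ((if descWord t.2.1 = u then X ^ invNum t.2.1 else 0)
            * (if descWord t.2.2 = v then X ^ invNum t.2.2 else 0)) := by
    rintro ⟨⟨A, hA⟩, σ, τ⟩
    show ((if descWord (toPerm A hA σ τ) = u ++ false :: v
          then (X : Polynomial ℚ) ^ invNum (toPerm A hA σ τ) else 0)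
        + (if descWord (toPerm A hA σ τ) = u ++ true :: v
          then (X : Polynomial ℚ) ^ invNum (toPerm A hA σ τ) else 0)) = _
    rw [descWord_toPerm A hA σ τ]
    rw [splitIte u v _ _ _ _ (by simp [descWord_length])]
    rw [invNum_toPerm]
    by_cases h1 : descWord σ = u <;> by_cases h2 : descWord τ = v <;>
      simp [h1, h2, pow_add] <;> ring
  simp only [step]
  rw [gPoly_eq_sum_subtype, Finset.sum_mul, Finset.sum_mul]
  rw [Fintype.sum_prod_type]
  refine Finset.sum_congr rfl fun a _ => ?_
  rw [Fintype.sum_prod_type]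
  simp only [← Finset.mul_sum]
  rw [← Finset.sum_mul, desPoly'', desPoly'']
  ring

lemma desPoly''_congr (w : List Bool) (N N' : ℕ) (h : N = N') :
    desPoly'' N w = desPoly'' N' w := by rw [h]

lemma qFactorial'_ne_zero (k : ℕ) : qFactorial' k ≠ 0 := by
  rw [qFactorial']
  rw [Finset.prod_ne_zero_iff]
  intro i _ hz
  have := congrArg (Polynomial.eval 1) hz
  simp [Polynomial.eval_finset_sum] at this
  have hpos : (0:ℚ) ≤ (i:ℚ) := Nat.cast_nonneg i
  linarith


end MacMahon

/-- `β_q(w) = ∑ q^{inv σ}` over permutations `σ` with descent word `w`. -/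
noncomputable def desPoly (w : List Bool) : Polynomial ℚ :=
  ∑ σ ∈ Finset.univ.filter
      (fun σ : Equiv.Perm (Fin (w.length + 1)) => descWord σ = w),
    Polynomial.X ^ invNum σ

/-- The `q`-factorial `[n]_q! = ∏_{i≤n} (1 + q + ⋯ + q^{i-1})`. -/
noncomputable def qFactorial (n : ℕ) : Polynomial ℚ :=
  ∏ i ∈ Finset.range n, ∑ j ∈ Finset.range (i + 1), Polynomial.X ^ j

namespace MacMahon
open Finset Polynomial

lemma desPoly_eq (w : List Bool) : desPoly w = desPoly'' (w.length + 1) w := by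
  rw [desPoly, desPoly'']
  exact Finset.sum_filter _ _

end MacMahon

open scoped Polynomial in
/-- MacMahon's Multiplication Theorem (q-analogue): for ab-words `u` of degree `n−1`
and `v` of degree `m−1`, the Gaussian binomial `[n+m choose n]_q` times
`β_q(u)·β_q(v)` equals `β_q(u·a·v) + β_q(u·b·v)`, as rational functions in `q`. -/
theorem stmt_8 (u v : List Bool) :
    (algebraMap (Polynomial ℚ) (RatFunc ℚ) (qFactorial (u.length + 1 + (v.length + 1))) /
        (algebraMap _ _ (qFactorial (u.length + 1)) *
          algebraMap _ _ (qFactorial (v.length + 1)))) *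
        (algebraMap _ _ (desPoly u) * algebraMap _ _ (desPoly v)) =
      algebraMap _ _ (desPoly (u ++ false :: v)) +
        algebraMap _ _ (desPoly (u ++ true :: v)) := by
  have hlen1 : (u ++ false :: v).length + 1 = u.length + 1 + (v.length + 1) := by
    simp; omega
  have hlen2 : (u ++ true :: v).length + 1 = u.length + 1 + (v.length + 1) := by
    simp; omega
  have e1 : desPoly (u ++ false :: v)
      = MacMahon.desPoly'' (u.length + 1 + (v.length + 1)) (u ++ false :: v) := by
    rw [MacMahon.desPoly_eq, MacMahon.desPoly''_congr _ _ _ hlen1]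
  have e2 : desPoly (u ++ true :: v)
      = MacMahon.desPoly'' (u.length + 1 + (v.length + 1)) (u ++ true :: v) := by
    rw [MacMahon.desPoly_eq, MacMahon.desPoly''_congr _ _ _ hlen2]
  have hq : ∀ k, qFactorial k = MacMahon.qFactorial' k := fun _ => rfl
  have PID : qFactorial (u.length + 1 + (v.length + 1)) * (desPoly u * desPoly v)
      = (desPoly (u ++ false :: v) + desPoly (u ++ true :: v))
        * (qFactorial (u.length + 1) * qFactorial (v.length + 1)) := by
    rw [e1, e2, MacMahon.key u v, hq, hq, hq]
    rw [show MacMahon.qFactorial' (u.length + 1 + (v.length + 1))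
        = MacMahon.gPoly (u.length + 1) (v.length + 1) * MacMahon.qFactorial' (u.length + 1)
          * MacMahon.qFactorial' (v.length + 1) from by
      rw [← MacMahon.invPoly_eq_qFactorial', ← MacMahon.invPoly_eq_qFactorial',
        ← MacMahon.invPoly_eq_qFactorial']
      exact MacMahon.master _ _]
    rw [MacMahon.desPoly_eq u, MacMahon.desPoly_eq v]
    ring
  have h1 : algebraMap (Polynomial ℚ) (RatFunc ℚ) (qFactorial (u.length + 1)) ≠ 0 :=
    RatFunc.algebraMap_ne_zero (MacMahon.qFactorial'_ne_zero _)
  have h2 : algebraMap (Polynomial ℚ) (RatFunc ℚ) (qFactorial (v.length + 1)) ≠ 0 :=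
    RatFunc.algebraMap_ne_zero (MacMahon.qFactorial'_ne_zero _)
  rw [div_mul_eq_mul_div, div_eq_iff (mul_ne_zero h1 h2)]
  simp only [← map_mul, ← map_add]
  exact congrArg _ PID
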